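/- Every nonzero indecomposable finite-dimensional representation (V, x) of the type A_n quiver (with arrows i → i−1) is isomorphic to (V(k,l), x(k,l)) for some 1 ≤ k ≤ l ≤ n. Here (V,x) is indecomposable means: whenever W = (W_i) and W' = (W'_i) are graded x-stable subspaces of V with V_i = W_i ⊕ W'_i for all i, one has W = 0 or W' = 0. -/

import Mathlib

/-!
STATEMENT 6: Every nonzero indecomposable finite-dimensional representation of
the type A_n quiver (arrows i → i−1) is isomorphic to (V(k,l), x(k,l)) for some
1 ≤ k ≤ l ≤ n.
-/

noncomputable section

/-- The graded piece V(k,l)_i of the interval representation. -/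
def VklA (k l i : ℤ) : Type := {r : ℤ // k ≤ r ∧ r ≤ l ∧ r = i} → ℂ

instance (k l i : ℤ) : AddCommGroup (VklA k l i) := by unfold VklA; infer_instance
instance (k l i : ℤ) : Module ℂ (VklA k l i) := by unfold VklA; infer_instance

/-- The map x(k,l)_i : V(k,l)_i → V(k,l)_{i-1}, sending e_r ↦ e_{r-1}
(with e_{k-1} = 0). -/
def xklA (k l i : ℤ) : VklA k l i →ₗ[ℂ] VklA k l (i - 1) where
  toFun v s :=
    if h : s.1 + 1 ≤ l then
      v ⟨s.1 + 1, by obtain ⟨h1, h2, h3⟩ := s.2; omega, h,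
        by obtain ⟨h1, h2, h3⟩ := s.2; omega⟩
    else 0
  map_add' a b := by
    funext s
    change (if h : s.1 + 1 ≤ l then (a + b) _ else 0) = (if h : s.1 + 1 ≤ l then a _ else 0) + (if h : s.1 + 1 ≤ l then b _ else 0)
    by_cases h : s.1 + 1 ≤ l
    · rw [dif_pos h, dif_pos h, dif_pos h]; rfl
    · rw [dif_neg h, dif_neg h, dif_neg h, add_zero]
  map_smul' c a := by
    funext s
    change (if h : s.1 + 1 ≤ l then (c • a) _ else 0) = c • (if h : s.1 + 1 ≤ l then a _ else 0)
    by_cases h : s.1 + 1 ≤ l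
    · rw [dif_pos h, dif_pos h]; rfl
    · rw [dif_neg h, dif_neg h, smul_zero]


section Aux
variable {V : ℤ → Type*} [∀ i, AddCommGroup (V i)] [∀ i, Module ℂ (V i)]

def castV {a b : ℤ} (h : a = b) : V a →ₗ[ℂ] V b := h ▸ (LinearMap.id : V a →ₗ[ℂ] V a)

theorem castV_id {a : ℤ} (h : a = a) (w : V a) : castV h w = w := rfl
theorem castV_trans {a b c : ℤ} (h1 : a = b) (h2 : b = c) (w : V a) :
    castV h2 (castV h1 w) = castV (h1.trans h2) w := by subst h1; subst h2; rfl
theorem castV_eq_zero {a b : ℤ} (h : a = b) (w : V a) : castV h w = 0 ↔ w = 0 := by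
  subst h; exact Iff.rfl
theorem castV_eq_iff {a b : ℤ} (h : a = b) (w : V a) (u : V b) :
    castV h w = u ↔ w = castV h.symm u := by subst h; exact Iff.rfl

variable (x : ∀ i : ℤ, V i →ₗ[ℂ] V (i - 1))

def Xpow : (j : ℕ) → (i : ℤ) → V i →ₗ[ℂ] V (i - j)
  | 0, i => castV (by simp)
  | j+1, i => castV (by push_cast; ring) ∘ₗ Xpow j (i - 1) ∘ₗ x i

theorem Xpow_zero (i : ℤ) (w : V i) : Xpow x 0 i w = castV (by simp) w := rfl
theorem Xpow_succ (j : ℕ) (i : ℤ) (w : V i) :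
    Xpow x (j+1) i w = castV (by push_cast; ring) (Xpow x j (i-1) (x i w)) := rfl
theorem x_castV {a b : ℤ} (h : a = b) (w : V a) :
    x b (castV h w) = castV (by rw [h]) (x a w) := by subst h; rfl
theorem Xpow_castV (j : ℕ) {a b : ℤ} (h : a = b) (w : V a) :
    Xpow x j b (castV h w) = castV (by rw [h]) (Xpow x j a w) := by subst h; rfl
theorem Xpow_congr {j j' : ℕ} (h : j = j') (i : ℤ) (w : V i) :
    Xpow x j i w = castV (by rw [h]) (Xpow x j' i w) := by subst h; rfl

theorem Xpow_add (a b : ℕ) (i : ℤ) (w : V i) :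
    Xpow x (a + b) i w
      = castV (by push_cast; ring) (Xpow x b (i - (a:ℤ)) (Xpow x a i w)) := by
  induction a generalizing i with
  | zero =>
      rw [Xpow_congr x (Nat.zero_add b) i w, Xpow_zero, Xpow_castV]
      simp only [castV_trans]
  | succ a ih =>
      rw [Xpow_congr x (Nat.succ_add a b) i w, Xpow_succ, ih, castV_trans,
        Xpow_succ x a i w, Xpow_castV]
      simp only [castV_trans]

end Aux

section Aux2
variable {V : ℤ → Type*} [∀ i, AddCommGroup (V i)] [∀ i, Module ℂ (V i)]
variable (x : ∀ i : ℤ, V i →ₗ[ℂ] V (i - 1))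

theorem Xpow_one (i : ℤ) (w : V i) :
    Xpow x 1 i w = castV (by push_cast; ring) (x i w) := by
  have h : Xpow x 1 i w
      = castV (by push_cast; ring) (Xpow x 0 (i-1) (x i w)) := rfl
  rw [h, Xpow_zero, castV_trans]

theorem Xpow_comp (a b : ℕ) {d i : ℤ} (ha : d - (a:ℤ) = i) (w : V d) :
    Xpow x b i (castV ha (Xpow x a d w))
      = castV (by push_cast; omega) (Xpow x (a+b) d w) := by
  subst ha
  rw [castV_id, Xpow_add x a b d w, castV_trans, castV_id]

theorem Xpow_succ' (a : ℕ) {d i : ℤ} (ha : d - (a:ℤ) = i) (w : V d) :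
    x i (castV ha (Xpow x a d w)) = castV (by push_cast; omega) (Xpow x (a+1) d w) := by
  subst ha
  rw [castV_id, Xpow_add x a 1 d w, Xpow_one, castV_trans, castV_trans, castV_id]

end Aux2
theorem stmt6 (n : ℤ) (hn : 1 ≤ n)
    -- a finite-dimensional representation of the A_n quiver, graded by
    -- I = {1,…,n} (the spaces V_i for i outside {1,…,n} are zero)
    (V : ℤ → Type*) [∀ i, AddCommGroup (V i)] [∀ i, Module ℂ (V i)]
    [∀ i, FiniteDimensional ℂ (V i)]
    (hsupp : ∀ i : ℤ, i < 1 ∨ n < i → Subsingleton (V i))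
    (x : ∀ i : ℤ, V i →ₗ[ℂ] V (i - 1))
    -- nonzero
    (hnonzero : ∃ i : ℤ, Nontrivial (V i))
    -- indecomposable
    (hindec : ∀ W W' : ∀ i : ℤ, Submodule ℂ (V i),
      (∀ i : ℤ, 2 ≤ i → i ≤ n → ∀ v ∈ W i, x i v ∈ W (i - 1)) →
      (∀ i : ℤ, 2 ≤ i → i ≤ n → ∀ v ∈ W' i, x i v ∈ W' (i - 1)) →
      (∀ i : ℤ, IsCompl (W i) (W' i)) →
      (∀ i : ℤ, W i = ⊥) ∨ (∀ i : ℤ, W' i = ⊥)) :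
    -- conclusion: (V,x) ≅ (V(k,l), x(k,l)) for some 1 ≤ k ≤ l ≤ n
    ∃ (k l : ℤ), 1 ≤ k ∧ k ≤ l ∧ l ≤ n ∧
      ∃ φ : ∀ i : ℤ, V i ≃ₗ[ℂ] VklA k l i,
        ∀ i : ℤ, 2 ≤ i → i ≤ n → ∀ v : V i,
          φ (i - 1) (x i v) = xklA k l i (φ i v) := by
  classical
  set P : ℕ → Prop := fun e => ∃ i : ℤ, ∃ w : V i, Xpow x e i w ≠ 0 with hP
  have hbdd : ∀ e, P e → e ≤ n.toNat := by
    rintro e ⟨i, w, hw⟩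
    have hw0 : w ≠ 0 := by rintro rfl; exact hw (map_zero _)
    have h1 : ¬ (i < 1 ∨ n < i) := by
      intro hc
      have := hsupp i hc
      exact hw0 (Subsingleton.elim w 0)
    have h2 : ¬ (i - (e:ℤ) < 1 ∨ n < i - (e:ℤ)) := by
      intro hc
      have := hsupp _ hc
      exact hw (Subsingleton.elim _ 0)
    omega
  have hP0 : P 0 := by
    obtain ⟨i, hi⟩ := hnonzero
    obtain ⟨w, hw⟩ := exists_ne (0 : V i)
    refine ⟨i, w, fun hc => hw ?_⟩
    rw [Xpow_zero, castV_eq_zero] at hc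
    exact hc
  set m : ℕ := Nat.findGreatest P n.toNat with hm
  have hPm : P m := Nat.findGreatest_spec (Nat.zero_le _) hP0
  have hzero : ∀ e, m < e → ∀ (i : ℤ) (w : V i), Xpow x e i w = 0 := by
    intro e he i w
    by_contra hw
    have hPe : P e := ⟨i, w, hw⟩
    exact Nat.findGreatest_is_greatest he (hbdd e hPe) hPe
  obtain ⟨d, v, hv⟩ := hPm
  have hv0 : v ≠ 0 := by rintro rfl; exact hv (map_zero _)
  have hVd : ¬ (d < 1 ∨ n < d) := by
    intro hc
    have := hsupp d hc
    exact hv0 (Subsingleton.elim v 0)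
  have hVk : ¬ (d - (m:ℤ) < 1 ∨ n < d - (m:ℤ)) := by
    intro hc
    have := hsupp _ hc
    exact hv (Subsingleton.elim _ 0)
  obtain ⟨f, hf⟩ : ∃ f : Module.Dual ℂ (V (d - (m:ℤ))), f (Xpow x m d v) ≠ 0 := by
    by_contra hc
    push_neg at hc
    exact hv ((Module.forall_dual_apply_eq_zero_iff ℂ _).mp hc)
  obtain ⟨lam, hlam1⟩ : ∃ lam : V (d - (m:ℤ)) →ₗ[ℂ] ℂ, lam (Xpow x m d v) = 1 :=
    ⟨(f (Xpow x m d v))⁻¹ • f, by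
      simp only [LinearMap.smul_apply, smul_eq_mul]
      exact inv_mul_cancel₀ hf⟩
  obtain ⟨k, hk⟩ : ∃ k : ℤ, k = d - (m:ℤ) := ⟨_, rfl⟩
  have hk1 : 1 ≤ k := by omega
  have hkd : k ≤ d := by omega
  have hdn : d ≤ n := by omega
  obtain ⟨uu, huu1, huu0⟩ :
      ∃ uu : ∀ i : ℤ, V i,
        (∀ i : ℤ, ∀ hid : i ≤ d, uu i = castV (by omega) (Xpow x (d - i).toNat d v)) ∧
        (∀ i : ℤ, ¬ i ≤ d → uu i = 0) :=
    ⟨fun i => if h : i ≤ d then castV (by omega) (Xpow x (d - i).toNat d v) else 0,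
      fun i h => by simp only [dif_pos h], fun i h => by simp only [dif_neg h]⟩
  obtain ⟨g, hg1, hg0⟩ :
      ∃ g : ∀ i : ℤ, V i →ₗ[ℂ] ℂ,
        (∀ i : ℤ, ∀ hki : k ≤ i, ∀ w : V i,
          g i w = lam (castV (by omega) (Xpow x (i - k).toNat i w))) ∧
        (∀ i : ℤ, ¬ k ≤ i → g i = 0) :=
    ⟨fun i => if h : k ≤ i
        then lam ∘ₗ castV (by omega) ∘ₗ Xpow x (i - k).toNat i else 0,
      fun i h w => by simp only [dif_pos h]; rfl, fun i h => by simp only [dif_neg h]⟩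
  have key1 : ∀ i : ℤ, k ≤ i → i ≤ d → g i (uu i) = 1 := by
    intro i h1 h2
    rw [hg1 i h1, huu1 i h2, Xpow_comp, castV_trans,
      Xpow_congr x (show (d - i).toNat + (i - k).toNat = m by omega) d v,
      castV_trans, castV_id, hlam1]
  have key2 : ∀ i : ℤ, i ≤ d → x i (uu i) = uu (i - 1) := by
    intro i h
    rw [huu1 i h, huu1 (i-1) (by omega), Xpow_succ',
      Xpow_congr x (show (d - (i-1)).toNat = (d - i).toNat + 1 by omega) d v,
      castV_trans]
  have key3 : ∀ i : ℤ, k ≤ i - 1 → ∀ w : V i, g (i-1) (x i w) = g i w := by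
    intro i h w
    rw [hg1 (i-1) h, hg1 i (by omega),
      Xpow_congr x (show (i - k).toNat = (i - 1 - k).toNat + 1 by omega) i w,
      Xpow_succ, castV_trans, castV_trans]
  have huu_small : ∀ i : ℤ, i < k → uu i = 0 := by
    intro i h
    rw [huu1 i (by omega), hzero _ (by omega) d v, map_zero]
  have hg_large : ∀ i : ℤ, d < i → ∀ w : V i, g i w = 0 := by
    intro i h w
    rw [hg1 i (by omega), hzero _ (by omega) i w, map_zero, map_zero]
  have hcompl : ∀ i : ℤ, IsCompl (Submodule.span ℂ {uu i}) (LinearMap.ker (g i)) := by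
    intro i
    by_cases h1 : k ≤ i
    · by_cases h2 : i ≤ d
      · constructor
        · rw [Submodule.disjoint_def]
          intro w hw1 hw2
          obtain ⟨c, rfl⟩ := Submodule.mem_span_singleton.mp hw1
          have hc := LinearMap.mem_ker.mp hw2
          rw [map_smul, key1 i h1 h2, smul_eq_mul, mul_one] at hc
          rw [hc, zero_smul]
        · rw [codisjoint_iff, eq_top_iff]
          intro w _
          have hmem : w - g i w • uu i ∈ LinearMap.ker (g i) := by
            rw [LinearMap.mem_ker, map_sub, map_smul, key1 i h1 h2, smul_eq_mul,
              mul_one, sub_self]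
          have hww : w = g i w • uu i + (w - g i w • uu i) := by abel
          rw [hww]
          exact Submodule.add_mem _
            (Submodule.mem_sup_left (Submodule.mem_span_singleton.mpr ⟨_, rfl⟩))
            (Submodule.mem_sup_right hmem)
      · have huz : uu i = 0 := huu0 i h2
        have hkz : LinearMap.ker (g i) = ⊤ := by
          rw [eq_top_iff]
          intro w _
          exact LinearMap.mem_ker.mpr (hg_large i (by omega) w)
        rw [huz, Submodule.span_zero_singleton, hkz]
        exact isCompl_bot_top
    · have huz : uu i = 0 := huu_small i (by omega)
      rw [huz, Submodule.span_zero_singleton, hg0 i h1, LinearMap.ker_zero]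
      exact isCompl_bot_top
  have hstabW : ∀ i : ℤ, 2 ≤ i → i ≤ n → ∀ w ∈ Submodule.span ℂ {uu i},
      x i w ∈ Submodule.span ℂ {uu (i-1)} := by
    intro i _ _ w hw
    obtain ⟨c, rfl⟩ := Submodule.mem_span_singleton.mp hw
    rw [map_smul]
    by_cases h : i ≤ d
    · rw [key2 i h]
      exact Submodule.smul_mem _ _ (Submodule.mem_span_singleton_self _)
    · rw [huu0 i h, map_zero, smul_zero]
      exact Submodule.zero_mem _
  have hstabW' : ∀ i : ℤ, 2 ≤ i → i ≤ n → ∀ w ∈ LinearMap.ker (g i),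
      x i w ∈ LinearMap.ker (g (i-1)) := by
    intro i _ _ w hw
    rw [LinearMap.mem_ker] at hw ⊢
    by_cases h : k ≤ i - 1
    · rw [key3 i h w, hw]
    · rw [hg0 (i-1) h]; rfl
  rcases hindec _ _ hstabW hstabW' hcompl with hbot | hker
  · exfalso
    have h := hbot d
    rw [Submodule.span_singleton_eq_bot, huu1 d le_rfl, castV_eq_zero,
      Xpow_congr x (show (d - d).toNat = 0 by omega) d v, castV_eq_zero,
      Xpow_zero, castV_eq_zero] at h
    exact hv0 h
  have hsub : ∀ i : ℤ, (i < k ∨ d < i) → ∀ w : V i, w = 0 := by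
    intro i hi w
    have hgw : g i w = 0 := by
      rcases hi with h | h
      · rw [hg0 i (by omega)]; rfl
      · exact hg_large i h w
    have hmem : w ∈ LinearMap.ker (g i) := LinearMap.mem_ker.mpr hgw
    rw [hker i] at hmem
    exact (Submodule.mem_bot _).mp hmem
  have hspan : ∀ i : ℤ, ∀ w : V i, w = g i w • uu i := by
    intro i w
    by_cases h1 : k ≤ i ∧ i ≤ d
    · have hmem : w - g i w • uu i ∈ LinearMap.ker (g i) := by
        rw [LinearMap.mem_ker, map_sub, map_smul, key1 i h1.1 h1.2, smul_eq_mul,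
          mul_one, sub_self]
      rw [hker i, Submodule.mem_bot] at hmem
      exact (sub_eq_zero.mp hmem)
    · have hw := hsub i (by omega) w
      rw [hw, map_zero, zero_smul]
  refine ⟨k, d, hk1, hkd, hdn, ?_⟩
  refine ⟨fun i =>
    { toFun := fun w => fun _ => g i w
      map_add' := fun w w' => by
        funext s
        show g i (w + w') = g i w + g i w'
        exact map_add _ _ _
      map_smul' := fun c w => by
        funext s
        show g i (c • w) = c • g i w
        exact map_smul _ _ _
      invFun := fun F => if h : k ≤ i ∧ i ≤ d then F ⟨i, h.1, h.2, rfl⟩ • uu i else 0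
      left_inv := fun w => by
        by_cases h : k ≤ i ∧ i ≤ d
        · simp only [dif_pos h]
          exact (hspan i w).symm
        · simp only [dif_neg h]
          exact (hsub i (by omega) w).symm
      right_inv := fun F => by
        by_cases h : k ≤ i ∧ i ≤ d
        · funext s
          simp only [dif_pos h]
          show g i (F ⟨i, h.1, h.2, rfl⟩ • uu i) = F s
          rw [map_smul, key1 i h.1 h.2, smul_eq_mul, mul_one]
          have hs : s = ⟨i, h.1, h.2, rfl⟩ := Subtype.ext s.2.2.2
          rw [hs]
        · funext s
          obtain ⟨r, hr⟩ := s
          exact absurd (⟨by omega, by omega⟩ : k ≤ i ∧ i ≤ d) h }, ?_⟩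
  intro i h2 hin w
  funext s
  obtain ⟨r, hr1, hr2, hr3⟩ := s
  show g (i-1) (x i w) = (if h : r + 1 ≤ d then g i w else 0)
  by_cases hcase : r + 1 ≤ d
  · rw [dif_pos hcase]
    exact key3 i (by omega) w
  · rw [dif_neg hcase]
    rw [hsub i (by omega) w, map_zero, map_zero]

end
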